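/- Let B, L, c, M > 0. Let g : ℝ^d → ℝ^{d×q} be bounded by B and L-Lipschitz, and suppose that for all x, z ∈ ℝ^d the matrix G_z(x) is invertible with ‖G_z(x)^{-1}‖ ≤ 1/c. Fix x ∈ ℝ^d, h ∈ (0, 1], and u ∈ ℝ^d, b ∈ ℝ^q with |u| ≤ M√h and |b| ≤ M√h, and define F : ℝ^d → ℝ^d by F(y) = x + u + g(x) G_{y−x}(x)^{-1} ( b − (∫₀¹ g(x + τ(y − x)) dτ)^T u ). Then there exists C > 0 depending only on B, L, c, M (not on x, h, u, b) such that |F(y₂) − F(y₁)| ≤ C √h |y₂ − y₁| for all y₁, y₂ ∈ ℝ^d; in particular there exists h₀ > 0 depending only on B, L, c, M such that for every h ≤ h₀ the map F is a contraction and hence admits a unique fixed point in ℝ^d. -/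

import Mathlib

open Matrix intervalIntegral
open scoped Matrix.Norms.L2Operator

private lemma toEuclideanLin_le_aux {m n : Type*} [Fintype m] [Fintype n] [DecidableEq n]
    (A : Matrix m n ℝ) (v : EuclideanSpace ℝ n) :
    ‖Matrix.toEuclideanLin A v‖ ≤ ‖A‖ * ‖v‖ :=
  ((Matrix.toEuclideanLin.trans LinearMap.toContinuousLinearMap) A).le_opNorm v

private lemma toEuclideanLin_mul_aux {m n l : Type*} [Fintype m] [Fintype n] [Fintype l]
    [DecidableEq n] [DecidableEq l]
    (A : Matrix m n ℝ) (B : Matrix n l ℝ) (v : EuclideanSpace ℝ l) :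
    Matrix.toEuclideanLin (A * B) v = Matrix.toEuclideanLin A (Matrix.toEuclideanLin B v) := by
  simp [Matrix.toEuclideanLin_apply, Matrix.mulVec_mulVec]

private lemma norm_transpose_aux {m n : Type*} [Fintype m] [Fintype n] [DecidableEq m]
    [DecidableEq n] (A : Matrix m n ℝ) : ‖Aᵀ‖ = ‖A‖ := by
  have h : Aᵀ = Aᴴ := by ext i j; simp [Matrix.conjTranspose_apply]
  rw [h, Matrix.l2_opNorm_conjTranspose]

theorem fixed_point_map_uniform_contraction (d q : ℕ) (B L c M : ℝ)
    (hB : 0 < B) (hL : 0 < L) (hc : 0 < c) (hM : 0 < M)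
    (g : EuclideanSpace ℝ (Fin d) → Matrix (Fin d) (Fin q) ℝ)
    (hcont : Continuous g) (hgB : ∀ x, ‖g x‖ ≤ B)
    (hgL : ∀ x y, ‖g x - g y‖ ≤ L * ‖x - y‖)
    (hinv : ∀ x z : EuclideanSpace ℝ (Fin d),
      IsUnit ((∫ τ in (0:ℝ)..1, g (x + τ • z))ᵀ * g x))
    (hinvb : ∀ x z : EuclideanSpace ℝ (Fin d),
      ‖(((∫ τ in (0:ℝ)..1, g (x + τ • z))ᵀ * g x)⁻¹ : Matrix (Fin q) (Fin q) ℝ)‖ ≤ 1 / c) :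
    ∃ C > (0:ℝ), ∃ h₀ > (0:ℝ),
      ∀ (x : EuclideanSpace ℝ (Fin d)) (h : ℝ), 0 < h → h ≤ 1 →
      ∀ (u : EuclideanSpace ℝ (Fin d)) (b : EuclideanSpace ℝ (Fin q)),
        ‖u‖ ≤ M * Real.sqrt h → ‖b‖ ≤ M * Real.sqrt h →
        (∀ y₁ y₂ : EuclideanSpace ℝ (Fin d),
          ‖(x + u + Matrix.toEuclideanLin (g x)
              (Matrix.toEuclideanLin (((∫ τ in (0:ℝ)..1, g (x + τ • (y₂ - x)))ᵀ * g x)⁻¹)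
                (b - Matrix.toEuclideanLin (∫ τ in (0:ℝ)..1, g (x + τ • (y₂ - x)))ᵀ u)))
           - (x + u + Matrix.toEuclideanLin (g x)
              (Matrix.toEuclideanLin (((∫ τ in (0:ℝ)..1, g (x + τ • (y₁ - x)))ᵀ * g x)⁻¹)
                (b - Matrix.toEuclideanLin (∫ τ in (0:ℝ)..1, g (x + τ • (y₁ - x)))ᵀ u)))‖
            ≤ C * Real.sqrt h * ‖y₂ - y₁‖) ∧
        (h ≤ h₀ → ∃! y : EuclideanSpace ℝ (Fin d),
          x + u + Matrix.toEuclideanLin (g x)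
              (Matrix.toEuclideanLin (((∫ τ in (0:ℝ)..1, g (x + τ • (y - x)))ᵀ * g x)⁻¹)
                (b - Matrix.toEuclideanLin (∫ τ in (0:ℝ)..1, g (x + τ • (y - x)))ᵀ u))
            = y) := by
  set C : ℝ := B * L * M * (B * (1 + B) / c ^ 2 + 1 / c) with hC
  have hCpos : 0 < C := by positivity
  refine ⟨C, hCpos, (1 / (2 * C)) ^ 2, by positivity, ?_⟩
  intro x h hh hh1 u b hu hb
  have hs : (0:ℝ) ≤ Real.sqrt h := Real.sqrt_nonneg h
  -- integrability and basic bounds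
  have hint : ∀ z : EuclideanSpace ℝ (Fin d),
      IntervalIntegrable (fun τ : ℝ => g (x + τ • z)) MeasureTheory.volume 0 1 := by
    intro z
    exact (hcont.comp (continuous_const.add (continuous_id.smul continuous_const))).intervalIntegrable 0 1
  set A : EuclideanSpace ℝ (Fin d) → Matrix (Fin d) (Fin q) ℝ :=
    fun y => ∫ τ in (0:ℝ)..1, g (x + τ • (y - x)) with hA
  have hAB : ∀ y, ‖A y‖ ≤ B := by
    intro y
    have := intervalIntegral.norm_integral_le_of_norm_le_const
      (C := B) (f := fun τ : ℝ => g (x + τ • (y - x))) (a := 0) (b := 1)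
      (fun τ _ => hgB _)
    simpa using this
  have hAL : ∀ y₁ y₂, ‖A y₂ - A y₁‖ ≤ L * ‖y₂ - y₁‖ := by
    intro y₁ y₂
    have hsub : A y₂ - A y₁
        = ∫ τ in (0:ℝ)..1, (g (x + τ • (y₂ - x)) - g (x + τ • (y₁ - x))) := by
      rw [intervalIntegral.integral_sub (hint _) (hint _)]
    rw [hsub]
    have := intervalIntegral.norm_integral_le_of_norm_le_const
      (C := L * ‖y₂ - y₁‖)
      (f := fun τ : ℝ => g (x + τ • (y₂ - x)) - g (x + τ • (y₁ - x))) (a := 0) (b := 1) ?_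
    · simpa using this
    · intro τ hτ
      rw [Set.uIoc_of_le (by norm_num)] at hτ
      have hd : (x + τ • (y₂ - x)) - (x + τ • (y₁ - x)) = τ • (y₂ - y₁) := by
        rw [add_sub_add_left_eq_sub, ← smul_sub]
        congr 1
        abel
      calc ‖g (x + τ • (y₂ - x)) - g (x + τ • (y₁ - x))‖
          ≤ L * ‖(x + τ • (y₂ - x)) - (x + τ • (y₁ - x))‖ := hgL _ _
        _ = L * (|τ| * ‖y₂ - y₁‖) := by rw [hd, norm_smul, Real.norm_eq_abs]
        _ ≤ L * (1 * ‖y₂ - y₁‖) := by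
            gcongr
            rw [abs_of_pos hτ.1]; exact hτ.2
        _ = L * ‖y₂ - y₁‖ := by ring
  -- the map F
  set F : EuclideanSpace ℝ (Fin d) → EuclideanSpace ℝ (Fin d) := fun y =>
    x + u + Matrix.toEuclideanLin (g x)
      (Matrix.toEuclideanLin (((A y)ᵀ * g x)⁻¹)
        (b - Matrix.toEuclideanLin (A y)ᵀ u)) with hF
  have key : ∀ y₁ y₂, ‖F y₂ - F y₁‖ ≤ C * Real.sqrt h * ‖y₂ - y₁‖ := by
    intro y₁ y₂
    set A₁ := A y₁; set A₂ := A y₂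
    set G₁ : Matrix (Fin q) (Fin q) ℝ := A₁ᵀ * g x with hG₁
    set G₂ : Matrix (Fin q) (Fin q) ℝ := A₂ᵀ * g x with hG₂
    have hU₁ : IsUnit G₁ := hinv x (y₁ - x)
    have hU₂ : IsUnit G₂ := hinv x (y₂ - x)
    have hd₁ : IsUnit G₁.det := (Matrix.isUnit_iff_isUnit_det _).mp hU₁
    have hd₂ : IsUnit G₂.det := (Matrix.isUnit_iff_isUnit_det _).mp hU₂
    have hGinv₁ : ‖G₁⁻¹‖ ≤ 1 / c := hinvb x (y₁ - x)
    have hGinv₂ : ‖G₂⁻¹‖ ≤ 1 / c := hinvb x (y₂ - x)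
    set v₁ : EuclideanSpace ℝ (Fin q) := b - Matrix.toEuclideanLin A₁ᵀ u with hv₁
    set v₂ : EuclideanSpace ℝ (Fin q) := b - Matrix.toEuclideanLin A₂ᵀ u with hv₂
    have hFdiff : F y₂ - F y₁
        = Matrix.toEuclideanLin (g x)
            (Matrix.toEuclideanLin G₂⁻¹ v₂ - Matrix.toEuclideanLin G₁⁻¹ v₁) := by
      simp only [hF]
      rw [add_sub_add_left_eq_sub, ← map_sub]
    -- inverse difference identity
    have hinvdiff : G₂⁻¹ - G₁⁻¹ = G₂⁻¹ * (G₁ - G₂) * G₁⁻¹ := by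
      rw [Matrix.mul_sub, Matrix.sub_mul, Matrix.mul_assoc,
        Matrix.mul_nonsing_inv _ hd₁, Matrix.mul_one,
        Matrix.nonsing_inv_mul _ hd₂, Matrix.one_mul]
    have hGdiffnorm : ‖G₂⁻¹ - G₁⁻¹‖ ≤ 1 / c * (‖A₁ - A₂‖ * B) * (1 / c) := by
      rw [hinvdiff]
      calc ‖G₂⁻¹ * (G₁ - G₂) * G₁⁻¹‖
          ≤ ‖G₂⁻¹ * (G₁ - G₂)‖ * ‖G₁⁻¹‖ := Matrix.l2_opNorm_mul _ _
        _ ≤ ‖G₂⁻¹‖ * ‖G₁ - G₂‖ * ‖G₁⁻¹‖ := by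
            gcongr; exact Matrix.l2_opNorm_mul _ _
        _ ≤ 1 / c * (‖A₁ - A₂‖ * B) * (1 / c) := by
            have hG : ‖G₁ - G₂‖ ≤ ‖A₁ - A₂‖ * B := by
              have he : G₁ - G₂ = (A₁ - A₂)ᵀ * g x := by
                rw [Matrix.transpose_sub, Matrix.sub_mul]
              rw [he]
              calc ‖(A₁ - A₂)ᵀ * g x‖ ≤ ‖(A₁ - A₂)ᵀ‖ * ‖g x‖ := Matrix.l2_opNorm_mul _ _
                _ ≤ ‖A₁ - A₂‖ * B := by
                    rw [norm_transpose_aux]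
                    exact mul_le_mul_of_nonneg_left (hgB x) (norm_nonneg _)
            exact mul_le_mul (mul_le_mul hGinv₂ hG (norm_nonneg _) (by positivity))
              hGinv₁ (norm_nonneg _) (by positivity)
    have hv₂norm : ‖v₂‖ ≤ (1 + B) * (M * Real.sqrt h) := by
      have h1 : ‖Matrix.toEuclideanLin A₂ᵀ u‖ ≤ B * (M * Real.sqrt h) := by
        calc ‖Matrix.toEuclideanLin A₂ᵀ u‖ ≤ ‖A₂ᵀ‖ * ‖u‖ := toEuclideanLin_le_aux _ _
          _ = ‖A₂‖ * ‖u‖ := by rw [norm_transpose_aux]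
          _ ≤ B * (M * Real.sqrt h) :=
              mul_le_mul (hAB _) hu (norm_nonneg _) hB.le
      calc ‖v₂‖ ≤ ‖b‖ + ‖Matrix.toEuclideanLin A₂ᵀ u‖ := norm_sub_le _ _
        _ ≤ M * Real.sqrt h + B * (M * Real.sqrt h) := add_le_add hb h1
        _ = (1 + B) * (M * Real.sqrt h) := by ring
    have hA12 : ‖A₁ - A₂‖ ≤ L * ‖y₂ - y₁‖ := by rw [norm_sub_rev]; exact hAL y₁ y₂
    have hvdiff : ‖v₂ - v₁‖ ≤ L * ‖y₂ - y₁‖ * (M * Real.sqrt h) := by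
      have he : v₂ - v₁ = Matrix.toEuclideanLin (A₁ - A₂)ᵀ u := by
        rw [hv₁, hv₂, Matrix.transpose_sub, map_sub, LinearMap.sub_apply]
        abel
      rw [he]
      calc ‖Matrix.toEuclideanLin (A₁ - A₂)ᵀ u‖
          ≤ ‖(A₁ - A₂)ᵀ‖ * ‖u‖ := toEuclideanLin_le_aux _ _
        _ ≤ L * ‖y₂ - y₁‖ * (M * Real.sqrt h) := by
            rw [norm_transpose_aux]
            exact mul_le_mul hA12 hu (norm_nonneg _) (by positivity)
    have hwdiff : Matrix.toEuclideanLin G₂⁻¹ v₂ - Matrix.toEuclideanLin G₁⁻¹ v₁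
        = Matrix.toEuclideanLin (G₂⁻¹ - G₁⁻¹) v₂ + Matrix.toEuclideanLin G₁⁻¹ (v₂ - v₁) := by
      simp only [map_sub, LinearMap.sub_apply]
      abel
    calc ‖F y₂ - F y₁‖
        = ‖Matrix.toEuclideanLin (g x)
            (Matrix.toEuclideanLin G₂⁻¹ v₂ - Matrix.toEuclideanLin G₁⁻¹ v₁)‖ := by rw [hFdiff]
      _ ≤ ‖g x‖ * ‖Matrix.toEuclideanLin G₂⁻¹ v₂ - Matrix.toEuclideanLin G₁⁻¹ v₁‖ :=
          toEuclideanLin_le_aux _ _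
      _ ≤ B * (‖Matrix.toEuclideanLin (G₂⁻¹ - G₁⁻¹) v₂‖
            + ‖Matrix.toEuclideanLin G₁⁻¹ (v₂ - v₁)‖) := by
          rw [hwdiff]; gcongr ?_ * ?_
          · exact hgB x
          · exact norm_add_le _ _
      _ ≤ B * ((1 / c * (‖A₁ - A₂‖ * B) * (1 / c)) * ((1 + B) * (M * Real.sqrt h))
            + (1 / c) * (L * ‖y₂ - y₁‖ * (M * Real.sqrt h))) := by
          gcongr
          · calc ‖Matrix.toEuclideanLin (G₂⁻¹ - G₁⁻¹) v₂‖
                ≤ ‖G₂⁻¹ - G₁⁻¹‖ * ‖v₂‖ := toEuclideanLin_le_aux _ _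
              _ ≤ _ := mul_le_mul hGdiffnorm hv₂norm (norm_nonneg _) (by positivity)
          · calc ‖Matrix.toEuclideanLin G₁⁻¹ (v₂ - v₁)‖
                ≤ ‖G₁⁻¹‖ * ‖v₂ - v₁‖ := toEuclideanLin_le_aux _ _
              _ ≤ _ := mul_le_mul hGinv₁ hvdiff (norm_nonneg _) (by positivity)
      _ ≤ B * ((1 / c * ((L * ‖y₂ - y₁‖) * B) * (1 / c)) * ((1 + B) * (M * Real.sqrt h))
            + (1 / c) * (L * ‖y₂ - y₁‖ * (M * Real.sqrt h))) := by gcongr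
      _ = C * Real.sqrt h * ‖y₂ - y₁‖ := by rw [hC]; field_simp
  refine ⟨key, ?_⟩
  intro hh0
  have hCs : C * Real.sqrt h ≤ 1 / 2 := by
    have h1 : Real.sqrt h ≤ 1 / (2 * C) := by
      have := Real.sqrt_le_sqrt hh0
      rwa [Real.sqrt_sq (by positivity)] at this
    calc C * Real.sqrt h ≤ C * (1 / (2 * C)) := by gcongr
      _ = 1 / 2 := by field_simp
  have hlip : LipschitzWith (1/2 : NNReal) F := by
    apply LipschitzWith.of_dist_le_mul
    intro y₁ y₂
    rw [dist_eq_norm, dist_eq_norm]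
    calc ‖F y₁ - F y₂‖ ≤ C * Real.sqrt h * ‖y₁ - y₂‖ := key y₂ y₁
      _ ≤ (1 / 2) * ‖y₁ - y₂‖ := by gcongr
      _ = ((1/2 : NNReal) : ℝ) * ‖y₁ - y₂‖ := by norm_num
  have hcontr : ContractingWith (1/2 : NNReal) F := ⟨by exact_mod_cast (by norm_num : (1:ℝ)/2 < 1), hlip⟩
  exact ⟨hcontr.fixedPoint F, hcontr.fixedPoint_isFixedPt,
    fun y hy => hcontr.fixedPoint_unique hy⟩
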